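/- Let G be a real p×n matrix, X₁ and D₀ real n×T matrices, R_D a real n×T matrix with D₀·D₀ᵀ ⪯ R_D·R_Dᵀ, and Y a real T×p matrix. Let ε₁ ≥ 0 be a real number and ε₂ : ℝ a nonnegative real. Set Υ(ε₂) := −G·X₁·Y − Yᵀ·X₁ᵀ·Gᵀ − ε₂·G·R_D·R_Dᵀ·Gᵀ, and assume ε₂ > 0 and that the (p+T)×(p+T) block matrix [[Υ(ε₂) − ε₁·I_p, Yᵀ], [Y, ε₂·I_T]] is positive semidefinite. Then −G·(X₁ − D₀)·Y − Yᵀ·(X₁ − D₀)ᵀ·Gᵀ ⪰ ε₁·I_p. (Pointwise form of the stabilization condition of Remark 1, for input vector fields independent of the state, where the closed-loop dynamics is (X₁ − D₀)·Y(x)·P⁻¹·Ẑ(x).) -/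

import Mathlib

open Matrix

private lemma psd_smul_aux {m : ℕ} {c : ℝ} (hc : 0 ≤ c) {M : Matrix (Fin m) (Fin m) ℝ}
    (hM : M.PosSemidef) : (c • M).PosSemidef := by
  refine ⟨?_, fun x => ?_⟩
  · unfold Matrix.IsHermitian
    rw [conjTranspose_smul, hM.1.eq]; simp
  · exact (hM.smul hc).2 x

/-- Pointwise form of the stabilization condition of Remark 1 (input vector field
independent of the state): if `D₀ D₀ᵀ ⪯ R_D R_Dᵀ`, `ε₁ ≥ 0`, `ε₂ > 0`, and the block
matrix `[[Υ(ε₂) − ε₁ I, Yᵀ], [Y, ε₂ I]]` with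
`Υ(ε₂) := −G X₁ Y − Yᵀ X₁ᵀ Gᵀ − ε₂ G R_D R_Dᵀ Gᵀ` is positive semidefinite, then
`−G (X₁ − D₀) Y − Yᵀ (X₁ − D₀)ᵀ Gᵀ ⪰ ε₁ I`. -/
theorem stabilization_pointwise_state_independent_input {p n T : ℕ}
    (G : Matrix (Fin p) (Fin n) ℝ) (X₁ D₀ : Matrix (Fin n) (Fin T) ℝ)
    (R_D : Matrix (Fin n) (Fin T) ℝ)
    (hD : (R_D * R_Dᵀ - D₀ * D₀ᵀ).PosSemidef)
    (Y : Matrix (Fin T) (Fin p) ℝ)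
    (ε₁ : ℝ) (hε₁ : 0 ≤ ε₁) (ε₂ : ℝ) (hε₂ : 0 < ε₂)
    (hblock : (fromBlocks
        ((-(G * X₁ * Y) - Yᵀ * X₁ᵀ * Gᵀ - ε₂ • (G * R_D * R_Dᵀ * Gᵀ))
          - ε₁ • (1 : Matrix (Fin p) (Fin p) ℝ))
        Yᵀ Y
        (ε₂ • (1 : Matrix (Fin T) (Fin T) ℝ))).PosSemidef) :
    ((-(G * (X₁ - D₀) * Y) - Yᵀ * (X₁ - D₀)ᵀ * Gᵀ)
      - ε₁ • (1 : Matrix (Fin p) (Fin p) ℝ)).PosSemidef := by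
  set A := (-(G * X₁ * Y) - Yᵀ * X₁ᵀ * Gᵀ - ε₂ • (G * R_D * R_Dᵀ * Gᵀ))
          - ε₁ • (1 : Matrix (Fin p) (Fin p) ℝ) with hA
  have h1 : ε₂⁻¹ * ε₂ = 1 := inv_mul_cancel₀ hε₂.ne'
  have h2 : ε₂ * ε₂⁻¹ = 1 := mul_inv_cancel₀ hε₂.ne'
  have h3 : ε₂⁻¹ * (ε₂ * ε₂) = ε₂ := by field_simp
  have hone : ((ε₂ • (1 : Matrix (Fin T) (Fin T) ℝ))).PosDef := by
    refine ⟨?_, fun x hx => ?_⟩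
    · unfold Matrix.IsHermitian
      rw [conjTranspose_smul, conjTranspose_one]; simp
    · exact ((PosDef.one).smul hε₂).2 hx
  haveI : Invertible ((ε₂ • (1 : Matrix (Fin T) (Fin T) ℝ))) :=
    ⟨ε₂⁻¹ • 1, by simp [smul_smul, h1, h2], by simp [smul_smul, h1, h2]⟩
  have hYH : (Yᵀ)ᴴ = Y := by ext i j; simp
  have hblock' : (fromBlocks A Yᵀ (Yᵀ)ᴴ (ε₂ • (1 : Matrix (Fin T) (Fin T) ℝ))).PosSemidef := by
    rw [hYH]; exact hblock
  have hS := (PosDef.fromBlocks₂₂ A Yᵀ hone).mp hblock'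
  rw [hYH] at hS
  have hinv : ((ε₂ • (1 : Matrix (Fin T) (Fin T) ℝ)))⁻¹ = ε₂⁻¹ • 1 := by
    rw [Matrix.inv_eq_left_inv]
    simp [smul_smul, h1, h2]
  rw [hinv] at hS
  have hP1 : (ε₂ • (G * (R_D * R_Dᵀ - D₀ * D₀ᵀ) * Gᵀ)).PosSemidef := by
    have h := hD.mul_mul_conjTranspose_same G
    have hGH : Gᴴ = Gᵀ := by ext i j; simp
    rw [hGH] at h
    exact psd_smul_aux hε₂.le h
  have hP2 : (ε₂⁻¹ • ((ε₂ • (G * D₀) + Yᵀ) * (ε₂ • (G * D₀) + Yᵀ)ᵀ)).PosSemidef := by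
    have h := posSemidef_self_mul_conjTranspose (ε₂ • (G * D₀) + Yᵀ)
    have hH : (ε₂ • (G * D₀) + Yᵀ)ᴴ = (ε₂ • (G * D₀) + Yᵀ)ᵀ := by ext i j; simp
    rw [hH] at h
    exact psd_smul_aux (inv_nonneg.mpr hε₂.le) h
  have key : ((-(G * (X₁ - D₀) * Y) - Yᵀ * (X₁ - D₀)ᵀ * Gᵀ)
      - ε₁ • (1 : Matrix (Fin p) (Fin p) ℝ))
      = (A - Yᵀ * (ε₂⁻¹ • (1 : Matrix (Fin T) (Fin T) ℝ)) * Y)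
        + (ε₂ • (G * (R_D * R_Dᵀ - D₀ * D₀ᵀ) * Gᵀ)
        + ε₂⁻¹ • ((ε₂ • (G * D₀) + Yᵀ) * (ε₂ • (G * D₀) + Yᵀ)ᵀ)) := by
    rw [hA]
    simp only [Matrix.mul_sub, Matrix.sub_mul, Matrix.add_mul, Matrix.mul_add,
      transpose_sub, transpose_add, transpose_smul, transpose_mul, transpose_transpose,
      Matrix.mul_smul, Matrix.smul_mul, smul_add, smul_sub, smul_smul, Matrix.mul_assoc,
      h1, h2, h3, one_smul, Matrix.mul_one, Matrix.one_mul]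
    module
  rw [key]
  exact hS.add (hP1.add hP2)
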